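/- Let (G,m,w,B) be a connected weighted finite graph with boundary with |B| ≥ 2, and suppose there is a nonnegative function ρ : Ω → ℝ such that w_{xy} = ρ_y m_x m_y for every x ∈ B and y ∈ Ω; set Deg := ⟨ρ,1⟩_Ω. Then for every f : B → ℝ with ⟨f,1⟩_B = 0, the harmonic extension u_f vanishes identically on Ω and Λf = Deg · f. Consequently σ₂ = σ₃ = ⋯ = σ_{|B|} = Deg. -/

import Mathlib

open Finset Real

namespace GraphSteklov

variable {V : Type*} [Fintype V] [DecidableEq V]

/-- The weighted graph Laplacian: `Δu(x) = (1/m_x) Σ_y (u(y)-u(x)) w_{xy}`. -/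
noncomputable def lap (m : V → ℝ) (w : V → V → ℝ) (u : V → ℝ) (x : V) : ℝ :=
  (1 / m x) * ∑ y, (u y - u x) * w x y

/-- Weighted inner product of two functions over a finite set `S` of vertices:
`⟨u,v⟩_S = Σ_{x ∈ S} u(x) v(x) m_x`. -/
def iprodOn (m : V → ℝ) (S : Finset V) (u v : V → ℝ) : ℝ :=
  ∑ x ∈ S, u x * v x * m x

/-- Full weighted inner product `⟨u,v⟩ = Σ_{x ∈ V} u(x) v(x) m_x`. -/
def iprod (m : V → ℝ) (u v : V → ℝ) : ℝ := ∑ x, u x * v x * m x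

/-- `(G,m,w)` is a weighted graph: positive vertex measure, symmetric edge weight,
positive exactly on edges. -/
def IsWeight (G : SimpleGraph V) (m : V → ℝ) (w : V → V → ℝ) : Prop :=
  (∀ x, 0 < m x) ∧ (∀ x y, w x y = w y x) ∧
  (∀ x y, G.Adj x y → 0 < w x y) ∧ (∀ x y, ¬ G.Adj x y → w x y = 0)

/-- `B` is a vertex-boundary of `G`: no two boundary vertices are adjacent, and every
boundary vertex is adjacent to some interior vertex. -/
def IsBoundary (G : SimpleGraph V) (B : Finset V) : Prop :=
  (∀ x ∈ B, ∀ y ∈ B, ¬ G.Adj x y) ∧ (∀ x ∈ B, ∃ y, y ∉ B ∧ G.Adj x y)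

/-- `μ` is the nondecreasing sequence of eigenvalues (with multiplicity) of `-Δ`,
witnessed by an orthonormal (w.r.t. the measure `m`) basis of eigenfunctions. -/
def IsLapSpectrum (m : V → ℝ) (w : V → V → ℝ) (μ : Fin (Fintype.card V) → ℝ) : Prop :=
  Monotone μ ∧ ∃ v : Fin (Fintype.card V) → V → ℝ,
    (∀ i x, - lap m w (v i) x = μ i * v i x) ∧
    (∀ i j, iprod m (v i) (v j) = if i = j then 1 else 0)

/-- `σ` is the nondecreasing sequence of Steklov eigenvalues (with multiplicity) of
the Dirichlet-to-Neumann map of `(G,m,w,B)`: it is witnessed by a family of functions,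
harmonic in the interior, whose restrictions to `B` are orthonormal w.r.t. `⟨·,·⟩_B`
and whose normal derivatives `∂u/∂n = -Δu` on `B` satisfy the eigenvalue equations. -/
def IsSteklovSpectrum (m : V → ℝ) (w : V → V → ℝ) (B : Finset V)
    (σ : Fin B.card → ℝ) : Prop :=
  Monotone σ ∧ ∃ u : Fin B.card → V → ℝ,
    (∀ i y, y ∉ B → lap m w (u i) y = 0) ∧
    (∀ i x, x ∈ B → - lap m w (u i) x = σ i * u i x) ∧
    (∀ i j, iprodOn m B (u i) (u j) = if i = j then 1 else 0)

/-- `Mu2LB m w S c` says that the second smallest Laplacian eigenvalue `μ₂` of the induced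
weighted graph on `S` is `≥ c`, expressed via the variational characterization
`μ₂(S) = min { ⟨du,du⟩_S / ⟨u,u⟩_S : u ≠ 0, ⟨u,1⟩_S = 0 }`. -/
def Mu2LB (m : V → ℝ) (w : V → V → ℝ) (S : Finset V) (c : ℝ) : Prop :=
  ∀ u : V → ℝ, (∑ y ∈ S, u y * m y) = 0 →
    c * (∑ y ∈ S, u y ^ 2 * m y) ≤ (1 / 2) * ∑ x ∈ S, ∑ y ∈ S, (u y - u x) ^ 2 * w x y

/-- The carré du champ operator `Γ(f,g) = ½(Δ(fg) - fΔg - gΔf)`. -/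
noncomputable def gammaOp (m : V → ℝ) (w : V → V → ℝ) (f g : V → ℝ) (x : V) : ℝ :=
  (lap m w (f * g) x - f x * lap m w g x - g x * lap m w f x) / 2

/-- The iterated carré du champ operator `Γ₂(f,f) = ½ΔΓ(f,f) - Γ(f,Δf)`. -/
noncomputable def gamma2Op (m : V → ℝ) (w : V → V → ℝ) (f : V → ℝ) (x : V) : ℝ :=
  (lap m w (gammaOp m w f f) x) / 2 - gammaOp m w f (lap m w f) x

/-- Edge connectivity: the least number of edges whose deletion disconnects `G`. -/
noncomputable def edgeConn (G : SimpleGraph V) : ℕ :=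
  sInf {n | ∃ F : Finset (Sym2 V), ↑F ⊆ G.edgeSet ∧ F.card = n ∧
    ¬ (G.deleteEdges ↑F).Connected}

/-- Vertex connectivity: the least number of vertices whose deletion disconnects `G`
(with the convention `v(K_n) = n - 1`, realized by allowing deletions leaving at most
one vertex). -/
noncomputable def vertConn (G : SimpleGraph V) : ℕ :=
  sInf {n | ∃ S : Finset V, S.card = n ∧
    (¬ (G.induce (↑(Sᶜ : Finset V) : Set V)).Connected ∨ (Sᶜ : Finset V).card ≤ 1)}

/-- Edge weights of the weighted path on `Fin n` (vertices `0,…,n-1`), where all edges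
have weight `1` except the edge incident to the vertex `0`, which has weight `lam`. -/
def pathW (lam : ℝ) {n : ℕ} (a b : Fin n) : ℝ :=
  if a.val + 1 = b.val ∨ b.val + 1 = a.val then
    (if a.val = 0 ∨ b.val = 0 then lam else 1) else 0

/-- The Laplacian (with unit vertex measure) of the weighted path `pathW lam`. -/
noncomputable def pathLap (lam : ℝ) {n : ℕ} (u : Fin n → ℝ) (a : Fin n) : ℝ :=
  ∑ b, (u b - u a) * pathW lam a b

/-- The largest Laplacian eigenvalue of the path `P_i` on `i` vertices with unit weight. -/
noncomputable def pathTopEig (i : ℕ) : ℝ :=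
  sSup {r | ∃ u : Fin i → ℝ, u ≠ 0 ∧ ∀ a, - pathLap 1 u a = r * u a}

/-- `𝒫(k,λ)`: the first Dirichlet eigenvalue of the path with vertices `0,1,…,k`, unit
vertex measure, edge weights `w_{01} = λ` and `w_{j,j+1} = 1` for `j ≥ 1`, and boundary
vertex `0`: the smallest eigenvalue of `-Δ` on functions vanishing at `0`. -/
noncomputable def pathDirichlet (k : ℕ) (lam : ℝ) : ℝ :=
  sInf {r | ∃ u : Fin (k + 1) → ℝ, u ≠ 0 ∧ u 0 = 0 ∧
    ∀ a : Fin (k + 1), a.val ≠ 0 → - pathLap lam u a = r * u a}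

/-- If `|B| ≥ 2` and `w_{xy} = ρ_y m_x m_y` for all `x ∈ B`, `y ∈ Ω`
with `ρ ≥ 0` on `Ω = V \ B`, then for every boundary datum `f` with `⟨f,1⟩_B = 0` the
harmonic extension `u_f` vanishes on `Ω` and `Λf = Deg · f` where `Deg = ⟨ρ,1⟩_Ω`;
consequently `σ₂ = σ₃ = ⋯ = σ_{|B|} = Deg`. (Here a harmonic extension is written as a
function `u : V → ℝ` with `Δu = 0` on `Ω`, the boundary datum being `u|_B`, and
`Λ(u|_B) = -Δu` on `B`.) -/
theorem split_weight_steklov_spectrum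
    {V : Type*} [Fintype V] [DecidableEq V]
    (G : SimpleGraph V) (m : V → ℝ) (w : V → V → ℝ) (B : Finset V)
    (hG : G.Connected) (hW : IsWeight G m w) (hB : IsBoundary G B)
    (hB2 : 2 ≤ B.card)
    (ρ : V → ℝ) (hρ : ∀ y, y ∉ B → 0 ≤ ρ y)
    (hsplit : ∀ x ∈ B, ∀ y, y ∉ B → w x y = ρ y * m x * m y) :
    (∀ u : V → ℝ, (∀ y, y ∉ B → lap m w u y = 0) →
      (∑ x ∈ B, u x * m x) = 0 →
      (∀ y, y ∉ B → u y = 0) ∧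
      (∀ x ∈ B, - lap m w u x = (∑ y ∈ Bᶜ, ρ y * m y) * u x)) ∧
    (∀ σ : Fin B.card → ℝ, IsSteklovSpectrum m w B σ →
      ∀ i : Fin B.card, 1 ≤ i.val → σ i = ∑ y ∈ Bᶜ, ρ y * m y) := by
  obtain ⟨hm, hsym, hpos, hzw⟩ := hW
  obtain ⟨hBB, hBadj⟩ := hB
  have hwnn : ∀ x y, 0 ≤ w x y := by
    intro x y
    by_cases h : G.Adj x y
    · exact (hpos x y h).le
    · rw [hzw x y h]
  have hBne : B.Nonempty := Finset.card_pos.mp (by omega)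
  have hMB : (0:ℝ) < ∑ x ∈ B, m x := Finset.sum_pos (fun x _ => hm x) hBne
  set MB : ℝ := ∑ x ∈ B, m x with hMBdef
  set Deg : ℝ := ∑ y ∈ Bᶜ, ρ y * m y with hDegdef
  have hDeg0 : 0 ≤ Deg := Finset.sum_nonneg fun y hy =>
    mul_nonneg (hρ y (Finset.mem_compl.mp hy)) (hm y).le
  -- Part 1
  have part1 : ∀ u : V → ℝ, (∀ y, y ∉ B → lap m w u y = 0) →
      (∑ x ∈ B, u x * m x) = 0 →
      (∀ y, y ∉ B → u y = 0) ∧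
      (∀ x ∈ B, - lap m w u x = Deg * u x) := by
    intro u hharm hmean
    -- Step A: rewrite the harmonicity equation at interior points
    have hA : ∀ y ∉ B, ∑ z ∈ Bᶜ, (u z - u y) * w y z = ρ y * m y * MB * u y := by
      intro y hy
      have h0 : ∑ z, (u z - u y) * w y z = 0 := by
        have h := hharm y hy
        unfold lap at h
        rcases mul_eq_zero.mp h with h' | h'
        · exact absurd h' (one_div_ne_zero (hm y).ne')
        · exact h'
      have hBsum : ∑ z ∈ B, (u z - u y) * w y z = -(ρ y * m y * MB * u y) := by
        have hcong : ∀ z ∈ B, (u z - u y) * w y z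
            = ρ y * m y * (u z * m z) - ρ y * m y * (u y * m z) := by
          intro z hz
          rw [hsym y z, hsplit z hz y hy]; ring
        rw [Finset.sum_congr rfl hcong, Finset.sum_sub_distrib, ← Finset.mul_sum,
          ← Finset.mul_sum, hmean]
        have : ∑ z ∈ B, u y * m z = u y * MB := by rw [← Finset.mul_sum]
        rw [this]; ring
      have hsplitsum := Finset.sum_add_sum_compl B (fun z => (u z - u y) * w y z)
      rw [h0] at hsplitsum
      rw [hBsum] at hsplitsum
      linarith
    -- Step B: energy identity
    have hS : ∑ y ∈ Bᶜ, u y * (∑ z ∈ Bᶜ, (u z - u y) * w y z)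
        = ∑ y ∈ Bᶜ, ρ y * m y * MB * u y ^ 2 := by
      refine Finset.sum_congr rfl fun y hy => ?_
      rw [hA y (Finset.mem_compl.mp hy)]; ring
    have hswap : ∑ y ∈ Bᶜ, ∑ z ∈ Bᶜ, u y * ((u z - u y) * w y z)
        = ∑ y ∈ Bᶜ, ∑ z ∈ Bᶜ, u z * ((u y - u z) * w y z) := by
      rw [Finset.sum_comm]
      refine Finset.sum_congr rfl fun y _ => Finset.sum_congr rfl fun z _ => ?_
      rw [hsym z y]
    have hT : 2 * (∑ y ∈ Bᶜ, ρ y * m y * MB * u y ^ 2)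
        + (∑ y ∈ Bᶜ, ∑ z ∈ Bᶜ, (u z - u y) ^ 2 * w y z) = 0 := by
      have h1 : ∑ y ∈ Bᶜ, u y * (∑ z ∈ Bᶜ, (u z - u y) * w y z)
          = ∑ y ∈ Bᶜ, ∑ z ∈ Bᶜ, u y * ((u z - u y) * w y z) := by
        refine Finset.sum_congr rfl fun y _ => ?_
        rw [Finset.mul_sum]
      have h2 : ∑ y ∈ Bᶜ, ∑ z ∈ Bᶜ, (u y * ((u z - u y) * w y z)
          + u z * ((u y - u z) * w y z))
          = - ∑ y ∈ Bᶜ, ∑ z ∈ Bᶜ, (u z - u y) ^ 2 * w y z := by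
        rw [← Finset.sum_neg_distrib]
        refine Finset.sum_congr rfl fun y _ => ?_
        rw [← Finset.sum_neg_distrib]
        refine Finset.sum_congr rfl fun z _ => by ring
      have h3 : ∑ y ∈ Bᶜ, ∑ z ∈ Bᶜ, (u y * ((u z - u y) * w y z)
          + u z * ((u y - u z) * w y z))
          = ∑ y ∈ Bᶜ, ∑ z ∈ Bᶜ, u y * ((u z - u y) * w y z)
          + ∑ y ∈ Bᶜ, ∑ z ∈ Bᶜ, u z * ((u y - u z) * w y z) := by
        rw [← Finset.sum_add_distrib]
        exact Finset.sum_congr rfl fun y _ => by rw [← Finset.sum_add_distrib]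
      rw [h3] at h2
      linarith [h1, h2, hswap, hS]
    have hT1nn : (0:ℝ) ≤ ∑ y ∈ Bᶜ, ρ y * m y * MB * u y ^ 2 :=
      Finset.sum_nonneg fun y hy =>
        mul_nonneg (mul_nonneg (mul_nonneg (hρ y (Finset.mem_compl.mp hy)) (hm y).le)
          hMB.le) (sq_nonneg _)
    have hT2nn : (0:ℝ) ≤ ∑ y ∈ Bᶜ, ∑ z ∈ Bᶜ, (u z - u y) ^ 2 * w y z :=
      Finset.sum_nonneg fun y _ => Finset.sum_nonneg fun z _ =>
        mul_nonneg (sq_nonneg _) (hwnn y z)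
    have hT1 : ∑ y ∈ Bᶜ, ρ y * m y * MB * u y ^ 2 = 0 := le_antisymm (by linarith) hT1nn
    have hT2 : ∑ y ∈ Bᶜ, ∑ z ∈ Bᶜ, (u z - u y) ^ 2 * w y z = 0 := by linarith
    -- termwise vanishing
    have hterm1 : ∀ y, y ∉ B → 0 < ρ y → u y = 0 := by
      intro y hy hρy
      have hz0 := (Finset.sum_eq_zero_iff_of_nonneg fun z hz =>
        mul_nonneg (mul_nonneg (mul_nonneg (hρ z (Finset.mem_compl.mp hz)) (hm z).le)
          hMB.le) (sq_nonneg _)).mp hT1 y (Finset.mem_compl.mpr hy)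
      have h4 : u y ^ 2 = 0 := by
        rcases mul_eq_zero.mp hz0 with h | h
        · exact absurd h (mul_pos (mul_pos hρy (hm y)) hMB).ne'
        · exact h
      exact pow_eq_zero_iff (by norm_num : (2:ℕ) ≠ 0) |>.mp h4
    have hterm2 : ∀ y, y ∉ B → ∀ z, z ∉ B → 0 < w y z → u y = u z := by
      intro y hy z hz hwyz
      have hin : ∀ a ∈ Bᶜ, (0:ℝ) ≤ ∑ b ∈ Bᶜ, (u b - u a) ^ 2 * w a b :=
        fun a _ => Finset.sum_nonneg fun b _ => mul_nonneg (sq_nonneg _) (hwnn a b)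
      have hrow := (Finset.sum_eq_zero_iff_of_nonneg hin).mp hT2 y (Finset.mem_compl.mpr hy)
      have := (Finset.sum_eq_zero_iff_of_nonneg fun b _ =>
        mul_nonneg (sq_nonneg _) (hwnn y b)).mp hrow z (Finset.mem_compl.mpr hz)
      rcases mul_eq_zero.mp this with h | h
      · have := sq_eq_zero_iff.mp h; linarith
      · exact absurd h hwyz.ne'
    -- Step C: connectivity
    obtain ⟨x₀, hx₀⟩ := hBne
    have hvanish : ∀ y, y ∉ B → u y = 0 := by
      have main : ∀ (y : V), ∀ _ : G.Walk y x₀, y ∉ B → u y = 0 := by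
        intro y p
        induction p with
        | nil => intro hy; exact absurd hx₀ hy
        | @cons a b c hadj q ih =>
          intro ha
          by_cases hb : b ∈ B
          · have hwab : 0 < w a b := hpos a b hadj
            have heq : w a b = ρ a * m b * m a := by
              rw [hsym a b]; exact hsplit b hb a ha
            have hρa : 0 < ρ a := by
              rw [heq] at hwab
              nlinarith [mul_pos (hm b) (hm a)]
            exact hterm1 a ha hρa
          · have hwab : 0 < w a b := hpos a b hadj
            rw [hterm2 a ha b hb hwab]
            exact ih hx₀ hb
      intro y hy
      exact main y ((hG y x₀).some) hy
    refine ⟨hvanish, ?_⟩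
    -- Step D: eigenvalue equation on B
    intro x hx
    unfold lap
    have hBe : ∑ z ∈ B, (u z - u x) * w x z = 0 := by
      refine Finset.sum_eq_zero fun z hz => ?_
      by_cases hzx : z = x
      · rw [hzx]; ring
      · have hnadj : ¬ G.Adj x z := hBB x hx z hz
        rw [hzw x z hnadj, mul_zero]
    have hCe : ∑ z ∈ Bᶜ, (u z - u x) * w x z = -(Deg * u x * m x) := by
      have hcong : ∀ z ∈ Bᶜ, (u z - u x) * w x z = -(u x * m x * (ρ z * m z)) := by
        intro z hz
        have hz' := Finset.mem_compl.mp hz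
        rw [hvanish z hz', hsplit x hx z hz']; ring
      rw [Finset.sum_congr rfl hcong, Finset.sum_neg_distrib, ← Finset.mul_sum, hDegdef]
      ring
    have htot : ∑ z, (u z - u x) * w x z = -(Deg * u x * m x) := by
      rw [← Finset.sum_add_sum_compl B (fun z => (u z - u x) * w x z), hBe, hCe, zero_add]
    rw [htot]
    field_simp
    rw [div_eq_iff (hm x).ne']; ring
  refine ⟨part1, ?_⟩
  -- Part 2
  intro σ hσ i hi
  obtain ⟨hmono, v, hharm, heig, horth⟩ := hσ
  -- shift-invariance of the Laplacian
  have lapshift : ∀ (f : V → ℝ) (c : ℝ) (y : V),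
      lap m w (fun x => f x - c) y = lap m w f y := by
    intro f c y
    unfold lap
    congr 1
    exact Finset.sum_congr rfl fun z _ => by ring
  -- the key equation: σ j * v j x = Deg * (v j x - c j) on B
  have key : ∀ (j : Fin B.card) (x : V), x ∈ B →
      σ j * v j x = Deg * (v j x - (∑ x ∈ B, v j x * m x) / MB) := by
    intro j x hx
    set c : ℝ := (∑ x ∈ B, v j x * m x) / MB with hc
    have h1 : ∀ y, y ∉ B → lap m w (fun x => v j x - c) y = 0 := by
      intro y hy; rw [lapshift]; exact hharm j y hy
    have h2 : ∑ x ∈ B, (v j x - c) * m x = 0 := by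
      have : ∑ x ∈ B, (v j x - c) * m x = (∑ x ∈ B, v j x * m x) - c * MB := by
        rw [hMBdef, Finset.mul_sum, ← Finset.sum_sub_distrib]
        exact Finset.sum_congr rfl fun z _ => by ring
      rw [this, hc, div_mul_cancel₀ _ hMB.ne']
      ring
    have h3 := (part1 (fun x => v j x - c) h1 h2).2 x hx
    rw [lapshift] at h3
    rw [← h3, heig j x hx]
  -- index 0
  have hcard : 0 < B.card := by omega
  set j0 : Fin B.card := ⟨0, hcard⟩ with hj0
  have hij0 : i ≠ j0 := by
    intro h
    rw [h] at hi
    simp [hj0] at hi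
  -- if σ j ≠ Deg then v j is constant on B
  have hconst : ∀ j : Fin B.card, σ j ≠ Deg → ∀ x ∈ B, ∀ x' ∈ B, v j x = v j x' := by
    intro j hj x hx x' hx'
    have h1 := key j x hx
    have h2 := key j x' hx'
    have : (σ j - Deg) * (v j x - v j x') = 0 := by linarith
    rcases mul_eq_zero.mp this with h | h
    · exact absurd (by linarith : σ j = Deg) hj
    · linarith
  by_contra hne
  obtain ⟨x₀, hx₀⟩ := hBne
  have hvisum : ∀ j : Fin B.card, σ j ≠ Deg →
      ∑ x ∈ B, v j x * m x = v j x₀ * MB := by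
    intro j hj
    rw [hMBdef, Finset.mul_sum]
    exact Finset.sum_congr rfl fun z hz => by
      rw [hconst j hj z hz x₀ hx₀]
  have hnormi : v i x₀ ≠ 0 := by
    intro h0
    have hnorm := horth i i
    rw [if_pos rfl] at hnorm
    unfold iprodOn at hnorm
    have : ∑ x ∈ B, v i x * v i x * m x = 0 := by
      refine Finset.sum_eq_zero fun z hz => ?_
      rw [hconst i hne z hz x₀ hx₀, h0]; ring
    rw [this] at hnorm
    norm_num at hnorm
  by_cases h0 : σ j0 = Deg
  · -- monotone: Deg = σ j0 ≤ σ i, and the constant-eigenfunction computation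
    have hle : σ j0 ≤ σ i := hmono (by rw [hj0, Fin.le_def]; exact Nat.zero_le _)
    have hkey := key i x₀ hx₀
    rw [hvisum i hne, mul_div_cancel_right₀ _ hMB.ne'] at hkey
    have : σ i * v i x₀ = 0 := by rw [hkey]; ring
    have hσi0 : σ i = 0 := by
      rcases mul_eq_zero.mp this with h | h
      · exact h
      · exact absurd h hnormi
    have : Deg = 0 := by linarith [h0 ▸ hle]
    exact hne (by rw [hσi0, this])
  · -- both v j0 and v i constant on B: contradicts orthogonality
    have hnorm0 : v j0 x₀ ≠ 0 := by
      intro h00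
      have hnorm := horth j0 j0
      rw [if_pos rfl] at hnorm
      unfold iprodOn at hnorm
      have : ∑ x ∈ B, v j0 x * v j0 x * m x = 0 := by
        refine Finset.sum_eq_zero fun z hz => ?_
        rw [hconst j0 h0 z hz x₀ hx₀, h00]; ring
      rw [this] at hnorm
      norm_num at hnorm
    have horth0 := horth i j0
    rw [if_neg hij0] at horth0
    unfold iprodOn at horth0
    have : ∑ x ∈ B, v i x * v j0 x * m x = v i x₀ * v j0 x₀ * MB := by
      rw [hMBdef, Finset.mul_sum]
      exact Finset.sum_congr rfl fun z hz => by
        rw [hconst i hne z hz x₀ hx₀, hconst j0 h0 z hz x₀ hx₀]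
    rw [this] at horth0
    rcases mul_eq_zero.mp horth0 with h | h
    · rcases mul_eq_zero.mp h with h' | h'
      · exact hnormi h'
      · exact hnorm0 h'
    · exact hMB.ne' h

end GraphSteklov
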